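/- Let Γ be a finite abelian group of order m and A ⊆ Γ with |A| = 2 and diam(Cay(Γ,A)) ≤ d. Then m ≤ ⌊(d+2)²/3⌋. -/

import Mathlib

open scoped Classical

section Aux

variable {Γ : Type*} [AddCommGroup Γ]

def phi (a b : Γ) (i j : ℕ) : Γ := i • a + j • b

lemma phi_succ_left (a b : Γ) (i j : ℕ) : phi a b (i+1) j = phi a b i j + a := by
  simp [phi, succ_nsmul]; abel

lemma phi_succ_right (a b : Γ) (i j : ℕ) : phi a b i (j+1) = phi a b i j + b := by
  simp [phi, succ_nsmul]; abel

lemma phi_zero (a b : Γ) : phi a b 0 0 = 0 := by simp [phi]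

variable (a b : Γ) (H : ∀ g : Γ, ∃ n : ℕ, ∃ i j : ℕ, i + j = n ∧ phi a b i j = g)

noncomputable def ell (g : Γ) : ℕ := Nat.find (H g)

lemma ell_spec (g : Γ) : ∃ i j, i + j = ell a b H g ∧ phi a b i j = g :=
  Nat.find_spec (H g)

lemma ell_le {g : Γ} {i j : ℕ} (h : phi a b i j = g) : ell a b H g ≤ i + j :=
  Nat.find_le ⟨i, j, rfl, h⟩

lemma exists_jmin (g : Γ) : ∃ j, ∃ i, i + j = ell a b H g ∧ phi a b i j = g := by
  obtain ⟨i, j, h1, h2⟩ := ell_spec a b H g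
  exact ⟨j, i, h1, h2⟩

noncomputable def jg (g : Γ) : ℕ := Nat.find (exists_jmin a b H g)

lemma jg_spec (g : Γ) : ∃ i, i + jg a b H g = ell a b H g ∧ phi a b i (jg a b H g) = g :=
  Nat.find_spec (exists_jmin a b H g)

lemma jg_le {g : Γ} {i j : ℕ} (h2 : phi a b i j = g) (h1 : i + j = ell a b H g) :
    jg a b H g ≤ j := Nat.find_le ⟨i, h1, h2⟩

def inS (i j : ℕ) : Prop :=
  ell a b H (phi a b i j) = i + j ∧ jg a b H (phi a b i j) = j

lemma inS_uniq {i j i' j' : ℕ} (h : inS a b H i j) (h' : inS a b H i' j')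
    (he : phi a b i j = phi a b i' j') : i = i' ∧ j = j' := by
  have hj : j = j' := by rw [← h.2, ← h'.2, he]
  have hi : i + j = i' + j' := by rw [← h.1, ← h'.1, he]
  omega

lemma inS_canon (g : Γ) :
    inS a b H (ell a b H g - jg a b H g) (jg a b H g) ∧
      phi a b (ell a b H g - jg a b H g) (jg a b H g) = g := by
  obtain ⟨i, h1, h2⟩ := jg_spec a b H g
  have hi : i = ell a b H g - jg a b H g := by omega
  subst hi
  refine ⟨⟨?_, ?_⟩, h2⟩
  · rw [h2]; omega
  · rw [h2]

lemma inS_zero : inS a b H 0 0 := by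
  have h0 : phi a b 0 0 = 0 := phi_zero a b
  have h1 : ell a b H (phi a b 0 0) = 0 :=
    Nat.le_zero.mp (ell_le a b H (g := phi a b 0 0) rfl)
  exact ⟨by omega, Nat.le_zero.mp (jg_le a b H rfl (by omega))⟩

lemma inS_left {i j : ℕ} (h : inS a b H (i+1) j) : inS a b H i j := by
  have hg : phi a b (i+1) j = phi a b i j + a := phi_succ_left a b i j
  obtain ⟨ha1, ha2⟩ := h
  rw [hg] at ha1 ha2
  have h : ell a b H (phi a b i j + a) = (i+1) + j ∧ jg a b H (phi a b i j + a) = j := ⟨ha1, ha2⟩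
  obtain ⟨i'', j'', hsum, hphi⟩ := ell_spec a b H (phi a b i j)
  have h2 : phi a b (i''+1) j'' = phi a b i j + a := by rw [phi_succ_left, hphi]
  have h3 : ell a b H (phi a b i j + a) ≤ i'' + 1 + j'' := ell_le a b H h2
  have hell : ell a b H (phi a b i j) = i + j := by
    have := ell_le a b H (g := phi a b i j) rfl
    omega
  refine ⟨hell, le_antisymm (jg_le a b H rfl (by omega)) ?_⟩
  -- j ≤ jg (phi i j)
  obtain ⟨i2, hs2, hp2⟩ := jg_spec a b H (phi a b i j)
  have h4 : phi a b (i2+1) (jg a b H (phi a b i j)) = phi a b i j + a := by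
    rw [phi_succ_left, hp2]
  have h5 : jg a b H (phi a b i j + a) ≤ jg a b H (phi a b i j) :=
    jg_le a b H h4 (by omega)
  omega

lemma inS_right {i j : ℕ} (h : inS a b H i (j+1)) : inS a b H i j := by
  have hg : phi a b i (j+1) = phi a b i j + b := phi_succ_right a b i j
  obtain ⟨ha1, ha2⟩ := h
  rw [hg] at ha1 ha2
  have h : ell a b H (phi a b i j + b) = i + (j+1) ∧ jg a b H (phi a b i j + b) = j + 1 := ⟨ha1, ha2⟩
  obtain ⟨i'', j'', hsum, hphi⟩ := ell_spec a b H (phi a b i j)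
  have h2 : phi a b i'' (j''+1) = phi a b i j + b := by rw [phi_succ_right, hphi]
  have h3 : ell a b H (phi a b i j + b) ≤ i'' + (j'' + 1) := ell_le a b H h2
  have hell : ell a b H (phi a b i j) = i + j := by
    have := ell_le a b H (g := phi a b i j) rfl
    omega
  refine ⟨hell, le_antisymm (jg_le a b H rfl (by omega)) ?_⟩
  obtain ⟨i2, hs2, hp2⟩ := jg_spec a b H (phi a b i j)
  have h4 : phi a b i2 (jg a b H (phi a b i j) + 1) = phi a b i j + b := by
    rw [phi_succ_right, hp2]
  have h5 : jg a b H (phi a b i j + b) ≤ jg a b H (phi a b i j) + 1 :=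
    jg_le a b H h4 (by omega)
  omega

lemma inS_mono_j {i j j' : ℕ} (h : inS a b H i j') (hle : j ≤ j') : inS a b H i j := by
  induction j' with
  | zero =>
    have hj : j = 0 := by omega
    subst hj; exact h
  | succ n ih => 
    rcases Nat.lt_or_ge j (n+1) with hlt | hge
    · exact ih (inS_right a b H h) (by omega)
    · have : j = n + 1 := by omega
      subst this; exact h

end Aux
section Aux2

variable {Γ : Type*} [AddCommGroup Γ] (a b : Γ)
  (H : ∀ g : Γ, ∃ n : ℕ, ∃ i j : ℕ, i + j = n ∧ phi a b i j = g)
  (d : ℕ) (hd : ∀ g : Γ, ell a b H g ≤ d)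

noncomputable def hcol (i : ℕ) : ℕ :=
  ((Finset.range (d+1)).filter (fun j => inS a b H i j)).card

include hd

lemma inS_sum_le {i j : ℕ} (h : inS a b H i j) : i + j ≤ d := by
  have h2 := hd (phi a b i j)
  rw [h.1] at h2; exact h2

lemma inS_iff_lt_hcol {i j : ℕ} : inS a b H i j ↔ j < hcol a b H d i := by
  constructor
  · intro h
    have hsub : Finset.range (j+1) ⊆ (Finset.range (d+1)).filter (fun j' => inS a b H i j') := by
      intro j' hj'
      rw [Finset.mem_range] at hj'
      have h1 : inS a b H i j' := inS_mono_j a b H h (by omega)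
      have h2 := inS_sum_le a b H d hd h1
      exact Finset.mem_filter.mpr ⟨Finset.mem_range.mpr (by omega), h1⟩
    have := Finset.card_le_card hsub
    rw [Finset.card_range] at this
    unfold hcol; omega
  · intro h
    by_contra hn
    have hsub : (Finset.range (d+1)).filter (fun j' => inS a b H i j') ⊆ Finset.range j := by
      intro j' hj'
      rw [Finset.mem_filter] at hj'
      rw [Finset.mem_range]
      by_contra hge
      exact hn (inS_mono_j a b H hj'.2 (by omega))
    have := Finset.card_le_card hsub
    rw [Finset.card_range] at this
    unfold hcol at h; omega

lemma hcol_anti {i i' : ℕ} (h : i ≤ i') : hcol a b H d i' ≤ hcol a b H d i := by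
  have step : ∀ k, hcol a b H d (k+1) ≤ hcol a b H d k := by
    intro k
    by_contra hlt
    have h1 : inS a b H (k+1) (hcol a b H d k) :=
      (inS_iff_lt_hcol a b H d hd).mpr (by omega)
    have h2 : inS a b H k (hcol a b H d k) := inS_left a b H h1
    have := (inS_iff_lt_hcol a b H d hd).mp h2
    omega
  induction i' with
  | zero => have : i = 0 := by omega
            subst this; rfl
  | succ n ih =>
    rcases Nat.lt_or_ge i (n+1) with hlt | hge
    · exact le_trans (step n) (ih (by omega))
    · have : i = n + 1 := by omega
      subst this; rfl

lemma descent {z : ℕ} (hz1 : 1 ≤ z) (hpos : 1 ≤ hcol a b H d z)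
    (hdesc : hcol a b H d z < hcol a b H d (z-1)) :
    phi a b z (hcol a b H d z) = 0 := by
  set w := hcol a b H d z with hw
  have hnotS : ¬ inS a b H z w := fun h => by
    have := (inS_iff_lt_hcol a b H d hd).mp h; omega
  set g := phi a b z w with hg
  obtain ⟨hcan, hcphi⟩ := inS_canon a b H g
  set c1 := ell a b H g - jg a b H g with hc1
  set c2 := jg a b H g with hc2
  -- c2 = 0
  have hc2z : c2 = 0 := by
    by_contra hc2n
    have h1 : inS a b H c1 (c2 - 1) := inS_mono_j a b H hcan (by omega)
    have h2 : inS a b H z (w - 1) := (inS_iff_lt_hcol a b H d hd).mpr (by omega)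
    have e1 : phi a b c1 (c2 - 1) + b = g := by
      rw [← phi_succ_right]
      have : c2 - 1 + 1 = c2 := by omega
      rw [this, hcphi]
    have e2 : phi a b z (w - 1) + b = g := by
      rw [← phi_succ_right]
      have : w - 1 + 1 = w := by omega
      rw [this]
    have he : phi a b c1 (c2 - 1) = phi a b z (w - 1) := by
      have := e1.trans e2.symm
      exact add_right_cancel this
    obtain ⟨hq1, hq2⟩ := inS_uniq a b H h1 h2 he
    apply hnotS
    have : c1 = z ∧ c2 = w := by omega
    rw [← this.1, ← this.2]; exact hcan
  -- c1 = 0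
  have hc1z : c1 = 0 := by
    by_contra hc1n
    have hcan' : inS a b H c1 0 := by rw [← hc2z]; exact hcan
    have h1 : inS a b H (c1 - 1) 0 := by
      have : c1 - 1 + 1 = c1 := by omega
      apply inS_left a b H
      rw [this]; exact hcan'
    have h2 : inS a b H (z-1) w := (inS_iff_lt_hcol a b H d hd).mpr (by omega)
    have e1 : phi a b (c1 - 1) 0 + a = g := by
      rw [← phi_succ_left]
      have : c1 - 1 + 1 = c1 := by omega
      rw [this, ← hc2z, hcphi]
    have e2 : phi a b (z-1) w + a = g := by
      rw [← phi_succ_left]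
      have : z - 1 + 1 = z := by omega
      rw [this]
    have he : phi a b (c1-1) 0 = phi a b (z-1) w := by
      have := e1.trans e2.symm
      exact add_right_cancel this
    obtain ⟨hq1, hq2⟩ := inS_uniq a b H h1 h2 he
    omega
  have : g = phi a b 0 0 := by rw [← hcphi, hc1z, hc2z]
  rw [phi_zero] at this
  exact this

end Aux2
section Aux3

variable {Γ : Type*} [AddCommGroup Γ] [Fintype Γ] (a b : Γ)
  (H : ∀ g : Γ, ∃ n : ℕ, ∃ i j : ℕ, i + j = n ∧ phi a b i j = g)
  (d : ℕ) (hd : ∀ g : Γ, ell a b H g ≤ d)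

include hd

lemma card_eq_sum_hcol :
    Fintype.card Γ = ∑ i ∈ Finset.range (d+1), hcol a b H d i := by
  classical
  set c : Γ → ℕ × ℕ := fun g => (ell a b H g - jg a b H g, jg a b H g) with hc
  have hinj : Function.Injective c := by
    intro g g' he
    have h1 := (inS_canon a b H g).2
    have h2 := (inS_canon a b H g').2
    rw [← h1, ← h2]
    rw [hc] at he
    simp only [Prod.mk.injEq] at he
    rw [he.1, he.2]
  have hcard : Fintype.card Γ = (Finset.univ.image c).card := by
    rw [Finset.card_image_of_injective _ hinj, Finset.card_univ]
  set T : Finset (ℕ × ℕ) :=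
    ((Finset.range (d+1)) ×ˢ (Finset.range (d+1))).filter (fun p => inS a b H p.1 p.2) with hT
  have himg : Finset.univ.image c = T := by
    ext p
    simp only [Finset.mem_image, Finset.mem_univ, true_and, hT, Finset.mem_filter,
      Finset.mem_product, Finset.mem_range]
    constructor
    · rintro ⟨g, rfl⟩
      obtain ⟨hcan, hcphi⟩ := inS_canon a b H g
      have hs := inS_sum_le a b H d hd hcan
      simp only [hc]
      exact ⟨⟨by omega, by omega⟩, hcan⟩
    · rintro ⟨⟨h1, h2⟩, hin⟩
      refine ⟨phi a b p.1 p.2, ?_⟩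
      simp only [hc]
      have e1 : ell a b H (phi a b p.1 p.2) = p.1 + p.2 := hin.1
      have e2 : jg a b H (phi a b p.1 p.2) = p.2 := hin.2
      rw [e1, e2]
      have : p.1 + p.2 - p.2 = p.1 := by omega
      rw [this]
    
  rw [hcard, himg]
  rw [Finset.card_eq_sum_card_fiberwise (f := Prod.fst) (t := Finset.range (d+1))
    (fun p hp => by
      rw [hT, Finset.mem_coe, Finset.mem_filter, Finset.mem_product] at hp
      exact Finset.mem_coe.mpr hp.1.1)]
  apply Finset.sum_congr rfl
  intro i hi
  have hfib : T.filter (fun p => p.1 = i)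
      = ((Finset.range (d+1)).filter (fun j => inS a b H i j)).image (fun j => (i, j)) := by
    ext p
    simp only [hT, Finset.mem_filter, Finset.mem_product, Finset.mem_range,
      Finset.mem_image]
    constructor
    · rintro ⟨⟨⟨hp1, hp2⟩, hin⟩, hfst⟩
      exact ⟨p.2, ⟨hp2, by rw [← hfst]; exact hin⟩, by rw [← hfst]⟩
    · rintro ⟨j, ⟨hj, hin⟩, rfl⟩
      rw [Finset.mem_range] at hi
      exact ⟨⟨⟨hi, hj⟩, hin⟩, rfl⟩
  rw [hfib, Finset.card_image_of_injective _ (fun x y hxy => by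
    simpa using hxy)]
  rfl

end Aux3
section Aux4

variable {Γ : Type*} [AddCommGroup Γ] [Fintype Γ] (a b : Γ)
  (H : ∀ g : Γ, ∃ n : ℕ, ∃ i j : ℕ, i + j = n ∧ phi a b i j = g)
  (d : ℕ) (hd : ∀ g : Γ, ell a b H g ≤ d)

include hd

set_option linter.unusedSectionVars false in
lemma three_card_le : 3 * Fintype.card Γ ≤ (d+2)^2 := by
  classical
  have hq0 : 0 < hcol a b H d 0 := (inS_iff_lt_hcol a b H d hd).mp (inS_zero a b H)
  have hzero : hcol a b H d (d+1) = 0 := by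
    by_contra hne
    have h1 : inS a b H (d+1) 0 := (inS_iff_lt_hcol a b H d hd).mpr (by omega)
    have := inS_sum_le a b H d hd h1
    omega
  have hex : ∃ i, hcol a b H d i = 0 := ⟨d+1, hzero⟩
  set p := Nat.find hex with hp
  have hp0 : hcol a b H d p = 0 := Nat.find_spec hex
  have hpmin : ∀ i, i < p → hcol a b H d i ≠ 0 := fun i hi => Nat.find_min hex hi
  have hp1 : 1 ≤ p := by
    rcases Nat.eq_zero_or_pos p with h0 | h1
    · rw [h0] at hp0; omega
    · exact h1
  have hpd : p ≤ d + 1 := Nat.find_le hzero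
  have ht1 : 1 ≤ hcol a b H d (p-1) := by
    have := hpmin (p-1) (by omega); omega
  have hex2 : ∃ i, hcol a b H d i ≤ hcol a b H d (p-1) := ⟨p-1, le_refl _⟩
  set s := Nat.find hex2 with hs
  have hs0 : hcol a b H d s ≤ hcol a b H d (p-1) := Nat.find_spec hex2
  have hsmin : ∀ i, i < s → ¬ (hcol a b H d i ≤ hcol a b H d (p-1)) :=
    fun i hi => Nat.find_min hex2 hi
  have hsp : s ≤ p - 1 := Nat.find_le (le_refl _)
  have htq : hcol a b H d (p-1) ≤ hcol a b H d 0 := hcol_anti a b H d hd (Nat.zero_le (p-1))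
  have hflat : ∀ i, s ≤ i → i < p → hcol a b H d i = hcol a b H d (p-1) := by
    intro i h1 h2
    have l1 : hcol a b H d i ≤ hcol a b H d s := hcol_anti a b H d hd h1
    have l2 : hcol a b H d (p-1) ≤ hcol a b H d i :=
      hcol_anti a b H d hd (show i ≤ p - 1 by omega)
    omega
  have hfull : ∀ i, i < s → hcol a b H d i = hcol a b H d 0 := by
    intro i hi
    by_contra hne
    have hex3 : ∃ z, hcol a b H d z ≠ hcol a b H d 0 := ⟨i, hne⟩
    set z := Nat.find hex3 with hz
    have hz0 : hcol a b H d z ≠ hcol a b H d 0 := Nat.find_spec hex3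
    have hzle : z ≤ i := Nat.find_le hne
    have hz1 : 1 ≤ z := by
      rcases Nat.eq_zero_or_pos z with e | e
      · rw [e] at hz0; exact absurd rfl hz0
      · exact e
    have hzq : hcol a b H d (z-1) = hcol a b H d 0 := by
      by_contra hne2
      have := Nat.find_le (h := hex3) hne2
      omega
    have hdesc1 : hcol a b H d z < hcol a b H d (z-1) := by
      have := hcol_anti a b H d hd (Nat.zero_le z)
      omega
    have hposz : 1 ≤ hcol a b H d z := by
      have := hsmin z (by omega)
      omega
    have rel1 : phi a b z (hcol a b H d z) = 0 := descent a b H d hd hz1 hposz hdesc1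
    have hs1 : 1 ≤ s := by omega
    have hst : hcol a b H d s = hcol a b H d (p-1) := hflat s (le_refl s) (by omega)
    have hdesc2 : hcol a b H d s < hcol a b H d (s-1) := by
      have := hsmin (s-1) (by omega); omega
    have rel2 : phi a b s (hcol a b H d s) = 0 :=
      descent a b H d hd hs1 (by omega) hdesc2
    have p1 : inS a b H z (hcol a b H d z - 1) :=
      (inS_iff_lt_hcol a b H d hd).mpr (by omega)
    have p2 : inS a b H s (hcol a b H d s - 1) :=
      (inS_iff_lt_hcol a b H d hd).mpr (by omega)
    have e1 : phi a b z (hcol a b H d z - 1) + b = 0 := by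
      rw [← phi_succ_right]
      have e : hcol a b H d z - 1 + 1 = hcol a b H d z := by omega
      rw [e, rel1]
    have e2 : phi a b s (hcol a b H d s - 1) + b = 0 := by
      rw [← phi_succ_right]
      have e : hcol a b H d s - 1 + 1 = hcol a b H d s := by omega
      rw [e, rel2]
    have he : phi a b z (hcol a b H d z - 1) = phi a b s (hcol a b H d s - 1) :=
      add_right_cancel (e1.trans e2.symm)
    have := inS_uniq a b H p1 p2 he
    omega
  have c1 : p + hcol a b H d (p-1) ≤ d + 2 := by
    have h1 : inS a b H (p-1) (hcol a b H d (p-1) - 1) :=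
      (inS_iff_lt_hcol a b H d hd).mpr (by omega)
    have := inS_sum_le a b H d hd h1
    omega
  have c2 : s + hcol a b H d 0 ≤ d + 2 := by
    rcases Nat.eq_zero_or_pos s with e | e
    · have h2 : hcol a b H d 0 ≤ hcol a b H d (p-1) := by rw [e] at hs0; exact hs0
      omega
    · have hq : hcol a b H d (s-1) = hcol a b H d 0 := hfull (s-1) (by omega)
      have h1 : inS a b H (s-1) (hcol a b H d 0 - 1) :=
        (inS_iff_lt_hcol a b H d hd).mpr (by omega)
      have := inS_sum_le a b H d hd h1
      omega
  have hsum : Fintype.card Γ = s * hcol a b H d 0 + (p - s) * hcol a b H d (p-1) := by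
    rw [card_eq_sum_hcol a b H d hd, Finset.range_eq_Ico]
    rw [← Finset.sum_Ico_consecutive (fun i => hcol a b H d i) (Nat.zero_le s)
      (show s ≤ d+1 by omega)]
    rw [← Finset.sum_Ico_consecutive (fun i => hcol a b H d i) (show s ≤ p by omega)
      (show p ≤ d+1 by omega)]
    have e1 : ∑ i ∈ Finset.Ico 0 s, hcol a b H d i = s * hcol a b H d 0 := by
      calc ∑ i ∈ Finset.Ico 0 s, hcol a b H d i
          = ∑ _i ∈ Finset.Ico 0 s, hcol a b H d 0 := by
            apply Finset.sum_congr rfl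
            intro i hi
            rw [Finset.mem_Ico] at hi
            exact hfull i hi.2
        _ = s * hcol a b H d 0 := by
            rw [Finset.sum_const, Nat.card_Ico, smul_eq_mul, Nat.sub_zero]
    have e2 : ∑ i ∈ Finset.Ico s p, hcol a b H d i = (p - s) * hcol a b H d (p-1) := by
      calc ∑ i ∈ Finset.Ico s p, hcol a b H d i
          = ∑ _i ∈ Finset.Ico s p, hcol a b H d (p-1) := by
            apply Finset.sum_congr rfl
            intro i hi
            rw [Finset.mem_Ico] at hi
            exact hflat i hi.1 hi.2
        _ = (p - s) * hcol a b H d (p-1) := by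
            rw [Finset.sum_const, Nat.card_Ico, smul_eq_mul]
    have e3 : ∑ i ∈ Finset.Ico p (d+1), hcol a b H d i = 0 := by
      apply Finset.sum_eq_zero
      intro i hi
      rw [Finset.mem_Ico] at hi
      have := hcol_anti a b H d hd hi.1
      omega
    rw [e1, e2, e3]
    omega
  set q := hcol a b H d 0 with hqd
  set t := hcol a b H d (p-1) with htd
  have hsp' : s < p := by omega
  have hcast : ((p - s : ℕ) : ℤ) = (p : ℤ) - (s : ℤ) := by omega
  have c1' : (p : ℤ) + (t : ℤ) ≤ (d : ℤ) + 2 := by exact_mod_cast c1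
  have c2' : (s : ℤ) + (q : ℤ) ≤ (d : ℤ) + 2 := by exact_mod_cast c2
  have key : (3 : ℤ) * ((s:ℤ) * q + ((p:ℤ) - s) * t) ≤ ((d:ℤ) + 2)^2 := by
    have hs' : (0:ℤ) ≤ s := Int.natCast_nonneg s
    have ht' : (1:ℤ) ≤ t := by exact_mod_cast ht1
    have h1 : (s:ℤ) * q ≤ (s:ℤ) * (((d:ℤ)+2) - s) := by
      apply mul_le_mul_of_nonneg_left _ hs'
      omega
    have h2 : ((p:ℤ) - s) * t ≤ (((d:ℤ)+2) - s - t) * t := by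
      apply mul_le_mul_of_nonneg_right _ (by omega)
      omega
    nlinarith [sq_nonneg (2*((d:ℤ)+2) - 3*(s:ℤ) - 3*(t:ℤ)), sq_nonneg ((s:ℤ) - (t:ℤ))]
  have hfin : (3 : ℤ) * (Fintype.card Γ : ℤ) ≤ ((d:ℤ)+2)^2 := by
    rw [hsum]
    push_cast [hcast]
    linarith [key]
  have goal : 3 * Fintype.card Γ ≤ (d+2)^2 := by
    have : ((3 * Fintype.card Γ : ℕ) : ℤ) ≤ (((d+2)^2 : ℕ) : ℤ) := by
      push_cast
      linarith [hfin]
    exact_mod_cast this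
  exact goal

end Aux4
lemma multiset_count_sum {Γ : Type*} [AddCommGroup Γ] {a b : Γ} (hab : a ≠ b)
    (l : Multiset Γ) (hl : ∀ x ∈ l, x = a ∨ x = b) :
    l.count a + l.count b = Multiset.card l ∧
      phi a b (l.count a) (l.count b) = l.sum := by
  induction l using Multiset.induction_on with
  | empty => simp [phi]
  | cons x s ih =>
    have hx : x = a ∨ x = b := hl x (Multiset.mem_cons_self x s)
    have hs : ∀ y ∈ s, y = a ∨ y = b := fun y hy => hl y (Multiset.mem_cons_of_mem hy)
    obtain ⟨ih1, ih2⟩ := ih hs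
    rcases hx with rfl | rfl
    · rw [Multiset.count_cons_self, Multiset.count_cons_of_ne (Ne.symm hab)]
      constructor
      · rw [Multiset.card_cons]; omega
      · rw [phi_succ_left, ih2, Multiset.sum_cons]; abel
    · rw [Multiset.count_cons_self, Multiset.count_cons_of_ne hab]
      constructor
      · rw [Multiset.card_cons]; omega
      · rw [phi_succ_right, ih2, Multiset.sum_cons]; abel

theorem stmt_12 (Γ : Type*) [AddCommGroup Γ] [Fintype Γ] (A : Finset Γ)
    (hA : A.card = 2) (d : ℕ)
    (hdiam : ∀ g : Γ, ∃ l : Multiset Γ,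
      (∀ a ∈ l, a ∈ A) ∧ Multiset.card l ≤ d ∧ l.sum = g) :
    (Fintype.card Γ : ℤ) ≤ ⌊(((d : ℚ) + 2) ^ 2 / 3)⌋ := by
  obtain ⟨a, b, hab, rfl⟩ := Finset.card_eq_two.mp hA
  have hrep : ∀ g : Γ, ∃ i j : ℕ, i + j ≤ d ∧ phi a b i j = g := by
    intro g
    obtain ⟨l, hl, hcard, hsum⟩ := hdiam g
    have hl' : ∀ x ∈ l, x = a ∨ x = b := by
      intro x hx
      have := hl x hx
      simpa using this
    obtain ⟨h1, h2⟩ := multiset_count_sum hab l hl'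
    exact ⟨l.count a, l.count b, by omega, by rw [h2, hsum]⟩
  have H : ∀ g : Γ, ∃ n : ℕ, ∃ i j : ℕ, i + j = n ∧ phi a b i j = g := by
    intro g
    obtain ⟨i, j, _, h2⟩ := hrep g
    exact ⟨i + j, i, j, rfl, h2⟩
  have hd : ∀ g : Γ, ell a b H g ≤ d := by
    intro g
    obtain ⟨i, j, h1, h2⟩ := hrep g
    exact le_trans (ell_le a b H h2) h1
  have key : 3 * Fintype.card Γ ≤ (d+2)^2 := three_card_le a b H d hd
  rw [Int.le_floor]
  have key' : (3 : ℚ) * (Fintype.card Γ : ℚ) ≤ ((d : ℚ) + 2)^2 := by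
    exact_mod_cast key
  push_cast
  rw [le_div_iff₀ (by norm_num : (0:ℚ) < 3)]
  linarith
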